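/- Every λ = e^{2πiθ} in the dense G_δ set ⋂_{q₀≥1} S(q₀) (where S(q₀) is the set of angles admitting a rational approximation |θ − p/q| < 2^{−q!} with denominator q ≥ q₀) satisfies the Cremer condition limsup_{m→∞} (−(1/m) log Ω_λ(m)) = +∞, where Ω_λ(m) = min_{1≤k≤m}|λ^k − 1|. -/

import Mathlib

open Filter

/-- `Ω_λ(m) = min_{1 ≤ k ≤ m} |λ^k − 1|`. -/
noncomputable def OmegaMin (lam : ℂ) (m : ℕ) : ℝ :=
  sInf {x : ℝ | ∃ k : ℕ, 1 ≤ k ∧ k ≤ m ∧ x = ‖lam ^ k - 1‖}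

lemma aux_two_mul_le_factorial : ∀ q : ℕ, 3 ≤ q → 2 * q ≤ q.factorial := by
  intro q hq
  induction q with
  | zero => omega
  | succ n ih =>
    rcases Nat.lt_or_ge n 3 with h | h
    · interval_cases n <;> first | omega | simp [Nat.factorial]
    · have h1 := ih h
      have h2 : Nat.factorial (n + 1) = (n + 1) * Nat.factorial n := Nat.factorial_succ n
      nlinarith [Nat.factorial_pos n]

lemma aux_sq_lt_pow_factorial (q : ℕ) (hq : 3 ≤ q) : q * q < 2 ^ q.factorial := by
  have h1 : q < 2 ^ q := Nat.lt_two_pow_self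
  have h2 : 2 * q ≤ q.factorial := aux_two_mul_le_factorial q hq
  calc q * q < 2 ^ q * 2 ^ q := Nat.mul_lt_mul_of_lt_of_lt h1 h1
    _ = 2 ^ (2 * q) := by rw [← pow_add]; ring_nf
    _ ≤ 2 ^ q.factorial := Nat.pow_le_pow_right (by norm_num) h2

/-- if `λ = e^{2πiθ}` lies in every `S(q₀)` (i.e. for every `q₀ ≥ 1` there
is a rational `p/q` in lowest terms with `q ≥ q₀` and `|θ − p/q| < 2^{−q!}`), then `λ`
satisfies Cremer's condition `limsup_m −(1/m) log Ω_λ(m) = +∞`, expressed as: for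
every `C` one frequently has `−(1/m) log Ω_λ(m) > C`. -/
theorem cremer_condition_of_liouville (θ : ℝ) (lam : ℂ)
    (hlam : lam = Complex.exp (2 * Real.pi * Complex.I * θ))
    (happrox : ∀ q₀ : ℕ, 1 ≤ q₀ → ∃ (p : ℤ) (q : ℕ), 1 ≤ q ∧ q₀ ≤ q ∧
      Nat.Coprime p.natAbs q ∧ |θ - (p : ℝ) / (q : ℝ)| < 1 / 2 ^ (Nat.factorial q)) :
    ∀ C : ℝ, ∃ᶠ m : ℕ in atTop, C < -(1 / (m : ℝ)) * Real.log (OmegaMin lam m) := by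
  -- Step 1: θ is irrational.
  have hirr : ∀ k : ℕ, 1 ≤ k → ∀ n : ℤ, (k : ℝ) * θ ≠ (n : ℝ) := by
    intro k hk n heq
    obtain ⟨p, q, hq1, hq0, hcop, happ⟩ := happrox (max (k + 1) 4)
      (le_trans (by norm_num) (le_max_right _ _))
    have hkq : k < q := by have := le_trans (le_max_left (k+1) 4) hq0; omega
    have h4q : 4 ≤ q := le_trans (le_max_right _ _) hq0
    have hkR : (0:ℝ) < (k:ℝ) := by exact_mod_cast hk
    have hqR : (0:ℝ) < (q:ℝ) := by positivity
    have hθ : θ = (n : ℝ) / k := by field_simp; linarith [heq]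
    by_cases h : (n : ℤ) * q = p * k
    · -- then q ∣ k, contradicting k < q
      have hdvd : (q : ℤ) ∣ (k : ℤ) * p := ⟨n, by linarith [h]⟩
      have hgcd : Int.gcd (q : ℤ) p = 1 := by
        have h' : Nat.gcd p.natAbs q = 1 := hcop
        simpa [Int.gcd, Nat.gcd_comm] using h'
      have hdk : (q : ℤ) ∣ (k : ℤ) := Int.dvd_of_dvd_mul_left_of_gcd_one hdvd hgcd
      have hdk' : q ∣ k := Int.ofNat_dvd.mp (by exact_mod_cast hdk)
      have := Nat.le_of_dvd (by omega) hdk'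
      omega
    · -- |θ - p/q| ≥ 1/(kq) > 1/2^{q!}, contradiction
      have hnum : (1:ℝ) ≤ |((n * q - p * k : ℤ) : ℝ)| := by
        have hne : (n * q - p * k : ℤ) ≠ 0 := sub_ne_zero.2 h
        exact_mod_cast Int.one_le_abs hne
      have hdiff : θ - (p:ℝ)/q = ((n * q - p * k : ℤ) : ℝ) / ((k:ℝ) * q) := by
        rw [hθ]; push_cast; field_simp
      have hge : 1 / ((k:ℝ) * q) ≤ |θ - (p:ℝ)/q| := by
        rw [hdiff, abs_div, abs_of_pos (by positivity : (0:ℝ) < (k:ℝ)*q)]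
        exact div_le_div_of_nonneg_right hnum (by positivity)
      have hlt : (2:ℝ) ^ q.factorial < (k:ℝ) * q := by
        have h1 : 1 / ((k:ℝ) * q) < 1 / 2 ^ q.factorial := lt_of_le_of_lt hge happ
        exact lt_of_one_div_lt_one_div (by positivity) h1
      have hltN : 2 ^ q.factorial < k * q := by exact_mod_cast hlt
      have hle : k * q ≤ q * q := Nat.mul_le_mul_right q (le_of_lt hkq)
      have := aux_sq_lt_pow_factorial q (by omega)
      omega
  -- Step 2: lam ^ k ≠ 1 for k ≥ 1.
  have hpow : ∀ k : ℕ, 1 ≤ k → lam ^ k ≠ 1 := by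
    intro k hk h1
    rw [hlam, ← Complex.exp_nat_mul, Complex.exp_eq_one_iff] at h1
    obtain ⟨n, hn⟩ := h1
    have h2 : (2 * (Real.pi:ℂ) * Complex.I) * ((k:ℂ) * θ) =
        (2 * (Real.pi:ℂ) * Complex.I) * n := by linear_combination hn
    have hne : (2 * (Real.pi:ℂ) * Complex.I) ≠ 0 := by
      simp [Complex.I_ne_zero, Real.pi_ne_zero]
    have h3 : (k:ℂ) * (θ:ℂ) = (n:ℂ) := mul_left_cancel₀ hne h2
    have h4 : ((k:ℝ) * θ : ℝ) = ((n:ℝ) : ℝ) := by exact_mod_cast h3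
    exact hirr k hk n h4
  -- Step 3: positivity and upper bound of OmegaMin.
  have hOmega_pos : ∀ m : ℕ, 1 ≤ m → 0 < OmegaMin lam m := by
    intro m hm
    have hfin : {x : ℝ | ∃ k : ℕ, 1 ≤ k ∧ k ≤ m ∧ x = ‖lam ^ k - 1‖}.Finite := by
      apply ((Set.finite_Icc 1 m).image (fun k => ‖lam ^ k - 1‖)).subset
      rintro x ⟨k, h1, h2, rfl⟩
      exact ⟨k, ⟨h1, h2⟩, rfl⟩
    have hne : {x : ℝ | ∃ k : ℕ, 1 ≤ k ∧ k ≤ m ∧ x = ‖lam ^ k - 1‖}.Nonempty :=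
      ⟨‖lam ^ 1 - 1‖, 1, le_refl 1, hm, rfl⟩
    obtain ⟨k, hk1, hk2, hmem⟩ := hne.csInf_mem hfin
    rw [OmegaMin, hmem]
    exact norm_pos_iff.mpr (sub_ne_zero.2 (hpow k hk1))
  have hOmega_le : ∀ m : ℕ, 1 ≤ m → OmegaMin lam m ≤ ‖lam ^ m - 1‖ := by
    intro m hm
    apply csInf_le
    · exact ⟨0, by rintro x ⟨k, _, _, rfl⟩; exact norm_nonneg _⟩
    · exact ⟨m, hm, le_refl m, rfl⟩
  -- Step 4: main argument.
  intro C
  rw [frequently_atTop]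
  intro N
  set q₀ : ℕ := max (max (N + 1) 4) (⌈(C + 16) / Real.log 2⌉₊ + 1) with hq₀def
  obtain ⟨p, q, hq1, hq0, hcop, happ⟩ := happrox q₀
    (le_trans (le_trans (by norm_num) (le_max_right (N+1) 4)) (le_max_left _ _))
  have h4q : 4 ≤ q := le_trans (le_trans (le_max_right (N+1) 4) (le_max_left _ _)) hq0
  have hNq : N ≤ q := by
    have := le_trans (le_trans (le_max_left (N+1) 4) (le_max_left _ _)) hq0; omega
  have hceil : ⌈(C + 16) / Real.log 2⌉₊ + 1 ≤ q := le_trans (le_max_right _ _) hq0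
  refine ⟨q, hNq, ?_⟩
  set δ : ℝ := θ - (p:ℝ)/q with hδdef
  have hqR : (0:ℝ) < (q:ℝ) := by positivity
  have hπpos := Real.pi_pos
  have hπle : Real.pi ≤ 4 := Real.pi_le_four
  have hεpos : (0:ℝ) < 1 / 2 ^ q.factorial := by positivity
  -- lam ^ q = exp (2πI (q δ))
  have key : lam ^ q = Complex.exp (2 * (Real.pi:ℂ) * Complex.I * ((q:ℂ) * (δ:ℂ))) := by
    rw [hlam, ← Complex.exp_nat_mul]
    have hθc : (θ:ℂ) = (p:ℂ)/(q:ℂ) + (δ:ℂ) := by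
      rw [hδdef]; push_cast; ring
    have hsplit : (q:ℂ) * (2 * (Real.pi:ℂ) * Complex.I * (θ:ℂ)) =
        (p:ℂ) * (2 * (Real.pi:ℂ) * Complex.I) +
          2 * (Real.pi:ℂ) * Complex.I * ((q:ℂ) * (δ:ℂ)) := by
      rw [hθc]
      have hqc : (q:ℂ) ≠ 0 := by exact_mod_cast hqR.ne'
      field_simp
    rw [hsplit, Complex.exp_add, Complex.exp_int_mul_two_pi_mul_I, one_mul]
  have hz : 2 * (Real.pi:ℂ) * Complex.I * ((q:ℂ) * (δ:ℂ)) =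
      ((2 * Real.pi * q * δ : ℝ) : ℂ) * Complex.I := by push_cast; ring
  have habs : ‖(2 * (Real.pi:ℂ) * Complex.I * ((q:ℂ) * (δ:ℂ)))‖
      = 2 * Real.pi * (q:ℝ) * |δ| := by
    rw [hz, norm_mul, Complex.norm_I, mul_one, Complex.norm_real, Real.norm_eq_abs, abs_mul,
      abs_of_pos (by positivity : (0:ℝ) < 2 * Real.pi * (q:ℝ))]
  -- 2πq ≤ 2^{q!}
  have h8q : (8 * q : ℝ) ≤ 2 ^ q.factorial := by
    have h1 : 8 * q < 2 ^ (q + 3) := by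
      have := Nat.lt_two_pow_self (n := q)
      calc 8 * q < 8 * 2 ^ q := by omega
        _ = 2 ^ (q + 3) := by rw [pow_add]; ring
    have h2 : q + 3 ≤ q.factorial := by
      have := aux_two_mul_le_factorial q (by omega); omega
    have h3 : (8 * q : ℕ) ≤ 2 ^ q.factorial :=
      le_trans (le_of_lt h1) (Nat.pow_le_pow_right (by norm_num) h2)
    exact_mod_cast h3
  have h2πq : 2 * Real.pi * (q:ℝ) ≤ 2 ^ q.factorial := by nlinarith
  have hsmall : 2 * Real.pi * (q:ℝ) * |δ| ≤ 1 := by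
    calc 2 * Real.pi * (q:ℝ) * |δ| ≤ (2 ^ q.factorial : ℝ) * (1 / 2 ^ q.factorial) :=
          mul_le_mul h2πq happ.le (abs_nonneg δ) (by positivity)
      _ = 1 := by field_simp
  have hnorm : ‖lam ^ q - 1‖ ≤ 2 * (2 * Real.pi * (q:ℝ) * |δ|) := by
    rw [key]
    have := Complex.norm_exp_sub_one_le
      (x := 2 * (Real.pi:ℂ) * Complex.I * ((q:ℂ) * (δ:ℂ))) (by rw [habs]; exact hsmall)
    rwa [habs] at this
  -- exponential comparison
  have hlog2 : (0:ℝ) < Real.log 2 := Real.log_pos (by norm_num)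
  have hq1fac : ((q:ℝ) - 1) ≤ ((q - 1).factorial : ℕ) := by
    have h1 : q - 1 ≤ (q - 1).factorial := Nat.self_le_factorial _
    have h2 : ((q:ℝ) - 1) = ((q - 1 : ℕ) : ℝ) := by
      have : 1 ≤ q := by omega
      push_cast [Nat.cast_sub this]; ring
    rw [h2]; exact_mod_cast h1
  have hCbound : C + 16 ≤ ((q - 1).factorial : ℝ) * Real.log 2 := by
    have h1 : (C + 16) / Real.log 2 ≤ (⌈(C + 16) / Real.log 2⌉₊ : ℝ) := Nat.le_ceil _
    have h2 : (⌈(C + 16) / Real.log 2⌉₊ : ℝ) ≤ (q:ℝ) - 1 := by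
      have : (⌈(C + 16) / Real.log 2⌉₊ + 1 : ℕ) ≤ q := hceil
      have := Nat.cast_le (α := ℝ) |>.mpr this
      push_cast at this; linarith
    have h3 : (C + 16) / Real.log 2 ≤ ((q - 1).factorial : ℝ) := by linarith
    calc C + 16 = (C + 16) / Real.log 2 * Real.log 2 := by field_simp
      _ ≤ ((q - 1).factorial : ℝ) * Real.log 2 :=
          mul_le_mul_of_nonneg_right h3 hlog2.le
  have hfacsplit : (q.factorial : ℝ) = (q:ℝ) * ((q - 1).factorial : ℝ) := by
    have := Nat.mul_factorial_pred (n := q) (by omega)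
    rw [← this]; push_cast; ring
  have hxge : (16:ℝ) * q ≤ (q.factorial : ℝ) * Real.log 2 - C * q := by
    have : (q.factorial : ℝ) * Real.log 2 - C * q
        = (q:ℝ) * (((q - 1).factorial : ℝ) * Real.log 2 - C) := by
      rw [hfacsplit]; ring
    rw [this]
    have h16 : (16:ℝ) ≤ ((q - 1).factorial : ℝ) * Real.log 2 - C := by linarith
    nlinarith
  have h2pow : ((2:ℝ) ^ q.factorial) = Real.exp ((q.factorial : ℝ) * Real.log 2) := by
    rw [← Real.log_pow, Real.exp_log (by positivity)]
  have hexpx : (16:ℝ) * q < Real.exp ((q.factorial : ℝ) * Real.log 2 - C * q) := by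
    have h1 := Real.add_one_le_exp ((q.factorial : ℝ) * Real.log 2 - C * q)
    linarith
  have hkey : (16:ℝ) * q * (1 / 2 ^ q.factorial) < Real.exp (-(C * q)) := by
    have h0 : (0:ℝ) < Real.exp (-((q.factorial : ℝ) * Real.log 2)) := Real.exp_pos _
    have h1 : (1 : ℝ) / 2 ^ q.factorial = Real.exp (-((q.factorial : ℝ) * Real.log 2)) := by
      rw [h2pow, Real.exp_neg, one_div]
    rw [h1]
    calc (16:ℝ) * q * Real.exp (-((q.factorial : ℝ) * Real.log 2))
        < Real.exp ((q.factorial : ℝ) * Real.log 2 - C * q) *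
            Real.exp (-((q.factorial : ℝ) * Real.log 2)) :=
          mul_lt_mul_of_pos_right hexpx h0
      _ = Real.exp (-(C * q)) := by rw [← Real.exp_add]; ring_nf
  -- Ω < exp(-Cq)
  have hb2 : 2 * (2 * Real.pi * (q:ℝ) * |δ|) < 16 * q * (1 / 2 ^ q.factorial) := by
    have h1 : 2 * (2 * Real.pi * (q:ℝ)) ≤ 16 * q := by nlinarith
    have h2 : 2 * (2 * Real.pi * (q:ℝ) * |δ|) ≤ 16 * (q:ℝ) * |δ| := by
      nlinarith [abs_nonneg δ]
    have h3 : 16 * (q:ℝ) * |δ| < 16 * q * (1 / 2 ^ q.factorial) :=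
      mul_lt_mul_of_pos_left happ (by positivity)
    linarith
  have hΩlt : OmegaMin lam q < Real.exp (-(C * q)) :=
    lt_of_le_of_lt (le_trans (hOmega_le q (by omega)) hnorm) (lt_trans hb2 hkey)
  have hΩpos : 0 < OmegaMin lam q := hOmega_pos q (by omega)
  have hlog : Real.log (OmegaMin lam q) < -(C * q) :=
    (Real.log_lt_iff_lt_exp hΩpos).mpr hΩlt
  have hfinal : C * q < -Real.log (OmegaMin lam q) := by linarith
  calc C = C * q / q := by field_simp
    _ < -Real.log (OmegaMin lam q) / q := (div_lt_div_iff_of_pos_right hqR).mpr hfinal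
    _ = -(1 / (q:ℝ)) * Real.log (OmegaMin lam q) := by ring
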